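/- For the renormalized affinity matrix Â of a finite simple graph, all eigenvalues λ of Â satisfy λ > −1; equivalently, I + Â is positive definite. -/

import Mathlib

open Matrix Finset in
private lemma pd_aux (N : ℕ) (G : SimpleGraph (Fin N)) [DecidableRel G.Adj]
    (x : Fin N → ℝ) (hx : x ≠ 0) :
    0 < dotProduct x
        ((1 +
          Matrix.diagonal (fun i => (Real.sqrt (∑ j, (G.adjMatrix ℝ + 1) i j))⁻¹) *
            (G.adjMatrix ℝ + 1) *
          Matrix.diagonal (fun i => (Real.sqrt (∑ j, (G.adjMatrix ℝ + 1) i j))⁻¹)).mulVec x) := by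
  set A : Matrix (Fin N) (Fin N) ℝ := G.adjMatrix ℝ + 1 with hA
  have hAnn : ∀ i j, 0 ≤ A i j := by
    intro i j
    simp only [hA, Matrix.add_apply, Matrix.one_apply, SimpleGraph.adjMatrix_apply]
    positivity
  have hAdiag : ∀ i, A i i = 1 := by
    intro i
    simp [hA, Matrix.one_apply]
  have hsym : A.IsSymm := by
    rw [hA]
    exact (SimpleGraph.isSymm_adjMatrix G).add (Matrix.isSymm_one)
  have hAsymm : ∀ i j, A i j = A j i := fun i j => (hsym.apply i j).symm
  set d : Fin N → ℝ := fun i => ∑ j, A i j with hd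
  have hd1 : ∀ i, 1 ≤ d i := by
    intro i
    calc (1:ℝ) = A i i := (hAdiag i).symm
    _ ≤ d i := Finset.single_le_sum (fun j _ => hAnn i j) (mem_univ i)
  have hdpos : ∀ i, 0 < d i := fun i => lt_of_lt_of_le one_pos (hd1 i)
  set s : Fin N → ℝ := fun i => (Real.sqrt (d i))⁻¹ with hs
  have hspos : ∀ i, 0 < s i := fun i => by
    simp only [hs]
    exact inv_pos.mpr (Real.sqrt_pos.mpr (hdpos i))
  have hs2 : ∀ i, s i ^ 2 * d i = 1 := by
    intro i
    simp only [hs]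
    rw [← Real.sqrt_inv, Real.sq_sqrt (inv_nonneg.mpr (hdpos i).le)]
    exact inv_mul_cancel₀ (ne_of_gt (hdpos i))
  set y : Fin N → ℝ := fun i => s i * x i with hy
  -- rewrite the quadratic form
  have key : dotProduct x
        ((1 + Matrix.diagonal s * A * Matrix.diagonal s).mulVec x)
      = (∑ i, d i * y i ^ 2) + ∑ i, ∑ j, y i * A i j * y j := by
    have h1 : ∀ i, x i ^ 2 = d i * y i ^ 2 := by
      intro i
      simp only [hy]
      nlinarith [hs2 i]
    rw [Matrix.add_mulVec, Matrix.one_mulVec, dotProduct_add]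
    congr 1
    · simp only [dotProduct]
      exact Finset.sum_congr rfl fun i _ => by rw [← sq]; exact h1 i
    · simp only [dotProduct, Matrix.mulVec]
      refine Finset.sum_congr rfl fun i _ => ?_
      rw [Finset.mul_sum]
      refine Finset.sum_congr rfl fun j _ => ?_
      rw [Matrix.mul_diagonal, Matrix.diagonal_mul]
      simp only [hy]
      ring
  rw [key]
  -- rewrite as a sum of squares
  have hU2 : (∑ i, ∑ j, A i j * y j ^ 2 / 2) = ∑ i, ∑ j, A i j * y i ^ 2 / 2 := by
    rw [Finset.sum_comm]
    exact Finset.sum_congr rfl fun i _ => Finset.sum_congr rfl fun j _ => by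
      rw [hAsymm i j]
  have hD : (∑ i, d i * y i ^ 2)
      = (∑ i, ∑ j, A i j * y i ^ 2 / 2) + ∑ i, ∑ j, A i j * y j ^ 2 / 2 := by
    rw [hU2, ← Finset.sum_add_distrib]
    refine Finset.sum_congr rfl fun i _ => ?_
    rw [hd, Finset.sum_mul, ← Finset.sum_add_distrib]
    exact Finset.sum_congr rfl fun j _ => by ring
  have E : (∑ i, ∑ j, A i j * (y i + y j) ^ 2 / 2)
      = ((∑ i, ∑ j, A i j * y i ^ 2 / 2) + ∑ i, ∑ j, A i j * y j ^ 2 / 2)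
        + ∑ i, ∑ j, y i * A i j * y j := by
    rw [← Finset.sum_add_distrib, ← Finset.sum_add_distrib]
    refine Finset.sum_congr rfl fun i _ => ?_
    rw [← Finset.sum_add_distrib, ← Finset.sum_add_distrib]
    exact Finset.sum_congr rfl fun j _ => by ring
  have sq_form : (∑ i, d i * y i ^ 2) + ∑ i, ∑ j, y i * A i j * y j
      = ∑ i, ∑ j, A i j * (y i + y j) ^ 2 / 2 := by
    rw [E, hD]
  rw [sq_form]
  -- strict positivity using the diagonal term
  obtain ⟨i₀, hi₀⟩ : ∃ i, x i ≠ 0 := by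
    by_contra h
    push_neg at h
    exact hx (funext h)
  have hy0 : y i₀ + y i₀ ≠ 0 := by
    simp only [hy]
    intro h
    exact hi₀ (by nlinarith [hspos i₀, mul_ne_zero (ne_of_gt (hspos i₀)) hi₀])
  have hdiagpos : 0 < A i₀ i₀ * (y i₀ + y i₀) ^ 2 / 2 := by
    rw [hAdiag i₀]
    have h2 : 0 < (y i₀ + y i₀) ^ 2 :=
      lt_of_le_of_ne (sq_nonneg _) (Ne.symm (pow_ne_zero 2 hy0))
    linarith
  calc (0:ℝ) < A i₀ i₀ * (y i₀ + y i₀) ^ 2 / 2 := hdiagpos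
  _ ≤ ∑ j, A i₀ j * (y i₀ + y j) ^ 2 / 2 :=
      Finset.single_le_sum (f := fun j => A i₀ j * (y i₀ + y j) ^ 2 / 2)
        (fun j _ => by have := hAnn i₀ j; positivity) (mem_univ i₀)
  _ ≤ ∑ i, ∑ j, A i j * (y i + y j) ^ 2 / 2 :=
      Finset.single_le_sum (f := fun i => ∑ j, A i j * (y i + y j) ^ 2 / 2)
        (fun i _ => Finset.sum_nonneg fun j _ => by have := hAnn i j; positivity)
        (mem_univ i₀)

/-- For the renormalized affinity matrix `Â` of a finite simple graph, all eigenvalues `μ`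
satisfy `μ > −1`; equivalently, `I + Â` is positive definite. -/
theorem renormalized_affinity_eigenvalue_gt_neg_one (N : ℕ) (G : SimpleGraph (Fin N))
    [DecidableRel G.Adj] :
    (∀ (μ : ℝ) (v : Fin N → ℝ), v ≠ 0 →
      (Matrix.diagonal (fun i => (Real.sqrt (∑ j, (G.adjMatrix ℝ + 1) i j))⁻¹) *
          (G.adjMatrix ℝ + 1) *
        Matrix.diagonal (fun i => (Real.sqrt (∑ j, (G.adjMatrix ℝ + 1) i j))⁻¹)).mulVec v
        = μ • v → -1 < μ) ∧
    (∀ x : Fin N → ℝ, x ≠ 0 →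
      0 < dotProduct x
        ((1 +
          Matrix.diagonal (fun i => (Real.sqrt (∑ j, (G.adjMatrix ℝ + 1) i j))⁻¹) *
            (G.adjMatrix ℝ + 1) *
          Matrix.diagonal (fun i => (Real.sqrt (∑ j, (G.adjMatrix ℝ + 1) i j))⁻¹)).mulVec x)) := by
  refine ⟨?_, fun x hx => pd_aux N G x hx⟩
  intro μ v hv heig
  have h := pd_aux N G v hv
  rw [Matrix.add_mulVec, Matrix.one_mulVec, heig, dotProduct_add] at h
  have hvv : 0 < dotProduct v v := by
    obtain ⟨i₀, hi₀⟩ : ∃ i, v i ≠ 0 := by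
      by_contra h'; push_neg at h'; exact hv (funext h')
    refine Finset.sum_pos' (fun i _ => mul_self_nonneg _) ⟨i₀, Finset.mem_univ i₀, ?_⟩
    exact mul_self_pos.mpr hi₀
  have hμ : 0 < (1 + μ) * dotProduct v v := by
    have heq : dotProduct v v + μ * dotProduct v v
        = (1 + μ) * dotProduct v v := by ring
    rw [← heq]
    simpa [dotProduct_smul, smul_eq_mul] using h
  nlinarith [hμ, hvv]
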